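/- arXiv:1206.3018 — 3 statements merged into one kernel-verified Lean document; each statement's English description precedes it below -/
import Mathlib

section
/- The relativistic Burgers flux pair (T⁰, T¹) with T⁰(v) = v/√(1−ε²v²), T¹(v) = ε⁻²(−1 + 1/√(1−ε²v²)) satisfies the Lorentz compatibility relations: for all v, V ∈ (−1/ε,1/ε), γ(V)·(T⁰(v) − ε²V·T¹(v)) = T⁰(v̄) − T⁰(−V) and γ(V)·(−V·T⁰(v) + T¹(v)) = T¹(v̄) − T¹(−V), where v̄ = (v−V)/(1−ε²Vv) and γ(V) = (1−ε²V²)^{−1/2}. -/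
/-- Lorentz compatibility relations for the relativistic Burgers
flux pair (T⁰, T¹). -/
theorem stmt9 (ε v V : ℝ) (hε : 0 < ε)
    (hv : v ∈ Set.Ioo (-(1 / ε)) (1 / ε)) (hV : V ∈ Set.Ioo (-(1 / ε)) (1 / ε)) :
    let T0 : ℝ → ℝ := fun u => u / Real.sqrt (1 - ε ^ 2 * u ^ 2)
    let T1 : ℝ → ℝ := fun u => (ε ^ 2)⁻¹ * (-1 + (Real.sqrt (1 - ε ^ 2 * u ^ 2))⁻¹)
    let γ : ℝ := (1 - ε ^ 2 * V ^ 2) ^ (-(1 : ℝ) / 2)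
    let vb : ℝ := (v - V) / (1 - ε ^ 2 * V * v)
    γ * (T0 v - ε ^ 2 * V * T1 v) = T0 vb - T0 (-V) ∧
    γ * (-V * T0 v + T1 v) = T1 vb - T1 (-V) := by
  obtain ⟨hv1, hv2⟩ := hv
  obtain ⟨hV1, hV2⟩ := hV
  have hv2' : v ^ 2 < (1 / ε) ^ 2 := sq_lt_sq' hv1 hv2
  have hV2' : V ^ 2 < (1 / ε) ^ 2 := sq_lt_sq' hV1 hV2
  have hε2 : (0:ℝ) < ε ^ 2 := by positivity
  have ha : 0 < 1 - ε ^ 2 * v ^ 2 := by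
    have := mul_lt_mul_of_pos_left hv2' hε2
    have h1 : ε ^ 2 * (1 / ε) ^ 2 = 1 := by field_simp
    linarith [h1 ▸ this]
  have hb : 0 < 1 - ε ^ 2 * V ^ 2 := by
    have := mul_lt_mul_of_pos_left hV2' hε2
    have h1 : ε ^ 2 * (1 / ε) ^ 2 = 1 := by field_simp
    linarith [h1 ▸ this]
  have hd : 0 < 1 - ε ^ 2 * V * v := by
    nlinarith [sq_nonneg (v - V), mul_pos hε2 hε2, sq_nonneg (v + V)]
  set sa := Real.sqrt (1 - ε ^ 2 * v ^ 2) with hsa_def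
  set sb := Real.sqrt (1 - ε ^ 2 * V ^ 2) with hsb_def
  have hsa : sa ^ 2 = 1 - ε ^ 2 * v ^ 2 := Real.sq_sqrt ha.le
  have hsb : sb ^ 2 = 1 - ε ^ 2 * V ^ 2 := Real.sq_sqrt hb.le
  have hsa0 : 0 < sa := Real.sqrt_pos.mpr ha
  have hsb0 : 0 < sb := Real.sqrt_pos.mpr hb
  intro T0 T1 γ vb
  have hγ : γ = sb⁻¹ := by
    show (1 - ε ^ 2 * V ^ 2) ^ (-(1:ℝ) / 2) = sb⁻¹
    rw [hsb_def, Real.sqrt_eq_rpow, ← Real.rpow_neg hb.le]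
    norm_num
  have hvbs : Real.sqrt (1 - ε ^ 2 * vb ^ 2) = sa * sb / (1 - ε ^ 2 * V * v) := by
    have h1 : (sa * sb / (1 - ε ^ 2 * V * v)) ^ 2 = 1 - ε ^ 2 * vb ^ 2 := by
      rw [div_pow, mul_pow, hsa, hsb]
      show _ = 1 - ε ^ 2 * ((v - V) / (1 - ε ^ 2 * V * v)) ^ 2
      have hd' : 1 - ε ^ 2 * v * V ≠ 0 := by nlinarith
      field_simp
      ring
    rw [← h1, Real.sqrt_sq (by positivity)]
  have hnegV : Real.sqrt (1 - ε ^ 2 * (-V) ^ 2) = sb := by rw [neg_sq]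
  constructor
  · show γ * (v / sa - ε ^ 2 * V * ((ε ^ 2)⁻¹ * (-1 + sa⁻¹))) =
      vb / Real.sqrt (1 - ε ^ 2 * vb ^ 2) - (-V) / Real.sqrt (1 - ε ^ 2 * (-V) ^ 2)
    rw [hγ, hvbs, hnegV]
    show _ = (v - V) / (1 - ε ^ 2 * V * v) / (sa * sb / (1 - ε ^ 2 * V * v)) - _
    have hd' : 1 - v * ε ^ 2 * V ≠ 0 := by nlinarith
    field_simp
    ring
  · show γ * (-V * (v / sa) + (ε ^ 2)⁻¹ * (-1 + sa⁻¹)) =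
      (ε ^ 2)⁻¹ * (-1 + (Real.sqrt (1 - ε ^ 2 * vb ^ 2))⁻¹) -
      (ε ^ 2)⁻¹ * (-1 + (Real.sqrt (1 - ε ^ 2 * (-V) ^ 2))⁻¹)
    rw [hγ, hvbs, hnegV]
    field_simp
    ring
end

section
/- If T⁰, T¹ : ℝ → ℝ are twice differentiable and satisfy the Galilean invariance relations T⁰(v+V) = T⁰(v) + C₁(V) and T¹(v+V) − V·T⁰(v+V) = T¹(v) + C₂(V) for all v, V ∈ ℝ (with C₁, C₂ depending only on V), and are normalized by T⁰(0) = T¹(0) = 0, T⁰'(0) = 1, T¹'(0) = 0, T¹''(0) = 1, then T⁰(v) = v and T¹(v) = v²/2 for all v. -/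
lemma cont_additive_linear (f : ℝ → ℝ) (hc : Continuous f)
    (ha : ∀ x y : ℝ, f (x + y) = f x + f y) : ∀ x : ℝ, f x = f 1 * x := by
  intro x
  let F : ℝ →+ ℝ := AddMonoidHom.mk' f ha
  have hcF : Continuous F := hc
  have hL := (F.toRealLinearMap hcF).map_smul x (1 : ℝ)
  have hco := AddMonoidHom.coe_toRealLinearMap F hcF
  rw [hco] at hL
  simpa [F, smul_eq_mul, mul_comm] using hL

/-- Galilean invariance forces T⁰(v) = v and T¹(v) = v²/2
under the stated normalization. -/
theorem stmt10 (T0 T1 C1 C2 : ℝ → ℝ)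
    (hT0 : ContDiff ℝ 2 T0) (hT1 : ContDiff ℝ 2 T1)
    (h1 : ∀ v V : ℝ, T0 (v + V) = T0 v + C1 V)
    (h2 : ∀ v V : ℝ, T1 (v + V) - V * T0 (v + V) = T1 v + C2 V)
    (n0 : T0 0 = 0) (n1 : T1 0 = 0)
    (n2 : deriv T0 0 = 1) (n3 : deriv T1 0 = 0)
    (n4 : deriv (deriv T1) 0 = 1) :
    ∀ v : ℝ, T0 v = v ∧ T1 v = v ^ 2 / 2 := by
  -- C1 V = T0 V
  have hC1 : ∀ V : ℝ, C1 V = T0 V := by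
    intro V; have := h1 0 V; rw [zero_add, n0, zero_add] at this; exact this.symm
  have hadd0 : ∀ x y : ℝ, T0 (x + y) = T0 x + T0 y := by
    intro x y; rw [h1 x y, hC1 y]
  have hlin0 := cont_additive_linear T0 hT0.continuous hadd0
  -- T0 1 = 1 via derivative
  have hdT0 : ∀ x, T0 x = T0 1 * x := hlin0
  have hT0eq : T0 = fun x => T0 1 * x := funext hdT0
  have hder : deriv T0 0 = T0 1 := by
    rw [hT0eq]; rw [deriv_const_mul_field]; simp
  have hT01 : T0 1 = 1 := by rw [← hder, n2]
  have hT0v : ∀ v : ℝ, T0 v = v := by intro v; rw [hdT0 v, hT01, one_mul]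
  -- C2 V = T1 V - V^2
  have hC2 : ∀ V : ℝ, C2 V = T1 V - V ^ 2 := by
    intro V; have := h2 0 V
    rw [zero_add, n1, zero_add, hT0v V] at this
    rw [← this]; ring
  -- g v = T1 v - v^2/2 is additive
  set g : ℝ → ℝ := fun v => T1 v - v ^ 2 / 2 with hg
  have haddg : ∀ x y : ℝ, g (x + y) = g x + g y := by
    intro x y
    have := h2 x y
    rw [hT0v (x + y), hC2 y] at this
    simp only [hg]
    nlinarith [this]
  have hgc : Continuous g := by
    exact hT1.continuous.sub ((continuous_pow 2).div_const 2)
  have hling := cont_additive_linear g hgc haddg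
  have hgeq : g = fun x => g 1 * x := funext hling
  have hdg : deriv g 0 = g 1 := by rw [hgeq]; rw [deriv_const_mul_field]; simp
  have hdg0 : deriv g 0 = 0 := by
    have hdiff : DifferentiableAt ℝ T1 0 := (hT1.differentiable (by norm_num)) 0
    have : deriv g 0 = deriv T1 0 - deriv (fun x : ℝ => x ^ 2 / 2) 0 := by
      apply deriv_sub hdiff
      exact (differentiable_pow 2).div_const 2 |>.differentiableAt
    rw [this, n3]; simp
  have hg1 : g 1 = 0 := by rw [← hdg, hdg0]
  intro v
  refine ⟨hT0v v, ?_⟩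
  have := hling v
  rw [hg1, zero_mul] at this
  simp only [hg] at this
  linarith
end

section
/- Fix m > 0 and c > 0. A differentiable function v : (2m, ∞) → ℝ with c² − v(r)² > 0 satisfies (1/2)·d/dr(r(r−2m)v²) = rv² − mc² on (2m,∞) if and only if the quantity (c² − v(r)²)/(1 − 2m/r) is constant on (2m,∞). -/
/-- a differentiable subluminal v on (2m,∞) is a steady solution
iff (c² − v²)/(1 − 2m/r) is constant. -/
theorem stmt13 (m c : ℝ) (hm : 0 < m) (hc : 0 < c) (v : ℝ → ℝ)
    (hv : DifferentiableOn ℝ v (Set.Ioi (2 * m)))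
    (hb : ∀ r ∈ Set.Ioi (2 * m), (v r) ^ 2 < c ^ 2) :
    (∀ r ∈ Set.Ioi (2 * m),
        HasDerivAt (fun s : ℝ => s * (s - 2 * m) * (v s) ^ 2 / 2)
          (r * (v r) ^ 2 - m * c ^ 2) r) ↔
    (∃ k : ℝ, ∀ r ∈ Set.Ioi (2 * m),
        (c ^ 2 - (v r) ^ 2) / (1 - 2 * m / r) = k) := by
  have hms : (0:ℝ) < 2 * m := by linarith
  set S := Set.Ioi (2 * m) with hS
  have hrpos : ∀ r ∈ S, 0 < r := fun r hr => lt_trans hms hr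
  have hrne : ∀ r ∈ S, r ≠ 0 := fun r hr => (hrpos r hr).ne'
  have hr2m : ∀ r ∈ S, r - 2 * m ≠ 0 := fun r hr => sub_ne_zero.2 (ne_of_gt hr)
  have hfac : ∀ r ∈ S, 1 - 2 * m / r ≠ 0 := by
    intro r hr
    have h1 : 2 * m / r < 1 := (div_lt_one (hrpos r hr)).2 hr
    linarith
  constructor
  · intro hsol
    -- H has derivative 0 on S
    set H : ℝ → ℝ := fun s => (c ^ 2 - (v s) ^ 2) / (1 - 2 * m / s) with hH
    have key : ∀ r ∈ S, HasDerivAt H 0 r := by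
      intro r hr
      have hrn := hrne r hr
      have hr2 := hr2m r hr
      have hf := hfac r hr
      have hvd : HasDerivAt v (deriv v r) r :=
        (hv.differentiableAt (isOpen_Ioi.mem_nhds hr)).hasDerivAt
      set d := deriv v r
      -- derivative of W computed from v
      have hW : HasDerivAt (fun s : ℝ => s * (s - 2 * m) * (v s) ^ 2 / 2)
          (((1 * (r - 2 * m) + r * 1) * (v r) ^ 2
            + r * (r - 2 * m) * (2 * v r * d)) / 2) r := by
        exact (((hasDerivAt_id r).mul ((hasDerivAt_id r).sub_const (2 * m))).mul
          (hvd.pow 2)).div_const 2 |>.congr_deriv (by simp only [Pi.mul_apply, Pi.pow_apply, id_eq, id]; ring)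
      have heq := (hsol r hr).unique hW
      -- key algebraic relation
      have hrel : r * (r - 2 * m) * (v r * d) = m * ((v r) ^ 2 - c ^ 2) := by
        linear_combination -heq
      -- derivative of H
      have hHd : HasDerivAt H
          (((-(2 * v r * d)) * (1 - 2 * m / r)
            - (c ^ 2 - (v r) ^ 2) * (0 - (0 * r - 2 * m * 1) / r ^ 2))
            / (1 - 2 * m / r) ^ 2) r := by
        have h1 : HasDerivAt (fun s : ℝ => c ^ 2 - (v s) ^ 2) (-(2 * v r * d)) r := by
          exact ((hasDerivAt_const r (c ^ 2)).sub (hvd.pow 2)).congr_deriv (by norm_num)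
        have h2 : HasDerivAt (fun s : ℝ => 1 - 2 * m / s)
            (0 - (0 * r - 2 * m * 1) / r ^ 2) r := by
          exact (hasDerivAt_const r 1).sub ((hasDerivAt_const r (2*m)).div (hasDerivAt_id r) hrn)
        exact h1.div h2 hf
      convert hHd using 1
      rw [eq_comm, div_eq_zero_iff]
      left
      field_simp
      linear_combination (-2) * hrel
    -- constancy on convex open set
    refine ⟨H (2 * m + 1), fun r hr => ?_⟩
    have h2m1 : (2 * m + 1) ∈ S := by simp [hS]
    exact (convex_Ioi (2 * m)).is_const_of_fderivWithin_eq_zero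
      (fun x hx => ((key x hx).differentiableAt).differentiableWithinAt)
      (fun x hx => by
        rw [fderivWithin_of_isOpen isOpen_Ioi hx, (key x hx).hasFDerivAt.fderiv]
        ext y; simp) hr h2m1
  · rintro ⟨k, hk⟩ r hr
    have hrn := hrne r hr
    -- v s ^ 2 = c^2 - k + 2*m*k/s on S
    have hvs : ∀ s ∈ S, (v s) ^ 2 = c ^ 2 - k + 2 * m * k / s := by
      intro s hs
      have := hk s hs
      have hsn := hrne s hs
      have hs2 := hr2m s hs
      have hf := hfac s hs
      field_simp at this ⊢
      linear_combination -this
    -- W equals an explicit polynomial-ish function near r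
    have hEq : (fun s : ℝ => s * (s - 2 * m) * (v s) ^ 2 / 2)
        =ᶠ[nhds r] (fun s : ℝ => (s * (s - 2 * m) * (c ^ 2 - k) + 2 * m * k * (s - 2 * m)) / 2) := by
      filter_upwards [isOpen_Ioi.mem_nhds hr] with s hs
      have hsn := hrne s hs
      rw [hvs s hs]
      field_simp
    have hφ : HasDerivAt (fun s : ℝ => (s * (s - 2 * m) * (c ^ 2 - k) + 2 * m * k * (s - 2 * m)) / 2)
        (r * (v r) ^ 2 - m * c ^ 2) r := by
      have : HasDerivAt (fun s : ℝ => (s * (s - 2 * m) * (c ^ 2 - k) + 2 * m * k * (s - 2 * m)) / 2)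
          ((((1 * (r - 2*m) + r * 1)) * (c ^ 2 - k) + 2 * m * k * 1) / 2) r := by
        exact ((((hasDerivAt_id r).mul ((hasDerivAt_id r).sub_const (2*m))).mul_const (c^2 - k)).add
          (((hasDerivAt_id r).sub_const (2*m)).const_mul (2*m*k))).div_const 2
      convert this using 1
      rw [hvs r hr]
      field_simp
      ring
    exact hφ.congr_of_eventuallyEq hEq
end
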